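/- Let C be a 2×2 diagonalizable, positive stable complex matrix with eigenvalues satisfying Re λ₁ < Re λ₂ and Im λ₁ = Im λ₂, and normalized eigenvectors v₁, v₂ with α = |⟨v₁, v₂⟩|. Then the smallest constant c such that every solution of f' = −Cf satisfies ‖f(t)‖₂ ≤ c e^{−Re λ₁ · t} ‖f(0)‖₂ for all t ≥ 0 equals 1/√(1−α²). -/

import Mathlib

open Matrix Complex Finset

-- derivative of t ↦ exp(μ * t), t real
lemma hasDerivAt_cexp_mul (μ : ℂ) (t : ℝ) :
    HasDerivAt (fun s : ℝ => Complex.exp (μ * s)) (μ * Complex.exp (μ * t)) t := by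
  have inner : HasDerivAt (fun z : ℂ => Complex.exp (μ * z)) (μ * Complex.exp (μ * t)) (t : ℂ) := by
    have h1 : HasDerivAt (fun z : ℂ => μ * z) μ (t : ℂ) := by
      simpa using (hasDerivAt_id (t : ℂ)).const_mul μ
    have := (Complex.hasDerivAt_exp (μ * t)).comp (t : ℂ) h1
    exact this.congr_deriv (mul_comm _ _)
  exact inner.comp_ofReal

-- scalar ODE uniqueness
lemma ode_scalar (lam : ℂ) (a : ℝ → ℂ) (h : ∀ t, HasDerivAt a (-(lam * a t)) t) (t : ℝ) :
    a t = Complex.exp (-lam * t) * a 0 := by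
  have key : ∀ s : ℝ, Complex.exp (lam * s) * a s = a 0 := by
    have hg : ∀ s : ℝ, HasDerivAt (fun s : ℝ => Complex.exp (lam * s) * a s) 0 s := by
      intro s
      have := (hasDerivAt_cexp_mul lam s).mul (h s)
      exact this.congr_deriv (by ring)
    intro s
    have hconst := is_const_of_deriv_eq_zero (f := fun s : ℝ => Complex.exp (lam * s) * a s)
      (fun x => (hg x).differentiableAt) (fun x => (hg x).deriv) s 0
    simpa using hconst
  have h1 := key t
  have h2 : Complex.exp (-lam * t) * (Complex.exp (lam * t) * a t) = a t := by
    rw [← mul_assoc, ← Complex.exp_add]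
    ring_nf
    simp
  rw [← h2, h1]

section IP
variable {E : Type*} [NormedAddCommGroup E] [InnerProductSpace ℂ E]

local notation "⟪" x ", " y "⟫" => @inner ℂ _ _ x y

lemma keybound (u₁ u₂ : E) (h1 : ‖u₁‖ = 1) (h2 : ‖u₂‖ = 1) (α : ℝ)
    (hα : α = ‖(⟪u₁, u₂⟫ : ℂ)‖) (a b : ℂ) :
    ‖a‖ * Real.sqrt (1 - α ^ 2) ≤ ‖a • u₁ + b • u₂‖ := by
  have hα0 : 0 ≤ α := hα ▸ norm_nonneg _
  have hα1 : α ≤ 1 := by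
    rw [hα]
    calc ‖(⟪u₁, u₂⟫ : ℂ)‖ ≤ ‖u₁‖ * ‖u₂‖ := norm_inner_le_norm u₁ u₂
    _ = 1 := by rw [h1, h2, one_mul]
  have hsq : ‖a‖ ^ 2 * (1 - α ^ 2) ≤ ‖a • u₁ + b • u₂‖ ^ 2 := by
    have hexp := norm_add_sq (𝕜 := ℂ) (a • u₁) (b • u₂)
    have hinner : (⟪a • u₁, b • u₂⟫ : ℂ) = (starRingEnd ℂ a) * b * ⟪u₁, u₂⟫ := by
      rw [inner_smul_left, inner_smul_right]; ring
    have hre : -(‖a‖ * ‖b‖ * α) ≤ RCLike.re (⟪a • u₁, b • u₂⟫ : ℂ) := by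
      have h' := RCLike.abs_re_le_norm (⟪a • u₁, b • u₂⟫ : ℂ)
      have habs : ‖(⟪a • u₁, b • u₂⟫ : ℂ)‖ = ‖a‖ * ‖b‖ * α := by
        rw [hinner, hα]
        simp [norm_mul, RCLike.norm_conj]
      have := abs_le.1 (habs ▸ h')
      linarith [this.1]
    have hn1 : ‖a • u₁‖ = ‖a‖ := by rw [norm_smul, h1, mul_one]
    have hn2 : ‖b • u₂‖ = ‖b‖ := by rw [norm_smul, h2, mul_one]
    rw [hexp, hn1, hn2]
    nlinarith [sq_nonneg (‖b‖ - α * ‖a‖), norm_nonneg a, norm_nonneg b]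
  have h1' : 0 ≤ 1 - α ^ 2 := by nlinarith
  calc ‖a‖ * Real.sqrt (1 - α ^ 2) = Real.sqrt (‖a‖ ^ 2 * (1 - α ^ 2)) := by
        rw [Real.sqrt_mul (sq_nonneg _), Real.sqrt_sq (norm_nonneg a)]
  _ ≤ Real.sqrt (‖a • u₁ + b • u₂‖ ^ 2) := Real.sqrt_le_sqrt hsq
  _ = ‖a • u₁ + b • u₂‖ := Real.sqrt_sq (norm_nonneg _)

lemma convex_bound (u₁ u₂ : E) (h1 : ‖u₁‖ = 1) (h2 : ‖u₂‖ = 1) (α : ℝ)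
    (hα : α = ‖(⟪u₁, u₂⟫ : ℂ)‖) (hlt : α < 1) (a b : ℂ) (s : ℝ) (hs0 : 0 ≤ s) (hs1 : s ≤ 1) :
    ‖a • u₁ + ((s : ℂ) * b) • u₂‖ ≤ (1 / Real.sqrt (1 - α ^ 2)) * ‖a • u₁ + b • u₂‖ := by
  have hα0 : 0 ≤ α := hα ▸ norm_nonneg _
  have hpos : 0 < 1 - α ^ 2 := by nlinarith
  have hsqrtpos : 0 < Real.sqrt (1 - α ^ 2) := Real.sqrt_pos.2 hpos
  have hsqrt1 : Real.sqrt (1 - α ^ 2) ≤ 1 := by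
    have := Real.sqrt_le_sqrt (show 1 - α ^ 2 ≤ 1 by nlinarith)
    simpa [Real.sqrt_one] using this
  have hK1 : 1 ≤ 1 / Real.sqrt (1 - α ^ 2) := by
    rw [le_div_iff₀ hsqrtpos]; simpa using hsqrt1
  set R := ‖a • u₁ + b • u₂‖ with hR
  have hR0 : 0 ≤ R := norm_nonneg _
  have ha : ‖a‖ ≤ (1 / Real.sqrt (1 - α ^ 2)) * R := by
    have := keybound u₁ u₂ h1 h2 α hα a b
    rw [div_mul_eq_mul_div, le_div_iff₀ hsqrtpos]
    linarith
  have hdecomp : a • u₁ + ((s : ℂ) * b) • u₂ = (1 - s) • (a • u₁) + s • (a • u₁ + b • u₂) := by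
    have h1' : ((s : ℂ) * b) • u₂ = s • (b • u₂) := by
      rw [mul_smul, Complex.coe_smul]
    rw [h1']
    module
  rw [hdecomp]
  calc ‖(1 - s) • (a • u₁) + s • (a • u₁ + b • u₂)‖
      ≤ ‖(1 - s) • (a • u₁)‖ + ‖s • (a • u₁ + b • u₂)‖ := norm_add_le _ _
  _ = (1 - s) * ‖a‖ + s * R := by
      rw [norm_smul, norm_smul, norm_smul, h1, mul_one]
      rw [Real.norm_of_nonneg (by linarith), Real.norm_of_nonneg hs0]
  _ ≤ (1 / Real.sqrt (1 - α ^ 2)) * R := by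
      nlinarith [mul_le_mul_of_nonneg_left ha (show (0:ℝ) ≤ 1 - s by linarith),
        mul_nonneg hs0 hR0, mul_le_mul_of_nonneg_right hK1 (mul_nonneg hs0 hR0)]

end IP

set_option maxHeartbeats 1000000 in
theorem stmt11 (C : Matrix (Fin 2) (Fin 2) ℂ) (lam1 lam2 : ℂ) (v1 v2 : Fin 2 → ℂ) (α : ℝ)
    (hv1 : v1 ≠ 0) (hv2 : v2 ≠ 0)
    (he1 : C.mulVec v1 = lam1 • v1) (he2 : C.mulVec v2 = lam2 • v2)
    (hre : lam1.re < lam2.re) (him : lam1.im = lam2.im)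
    (hstable : 0 < lam1.re)
    (hn1 : Real.sqrt (∑ i, ‖v1 i‖ ^ 2) = 1) (hn2 : Real.sqrt (∑ i, ‖v2 i‖ ^ 2) = 1)
    (hα : α = ‖star v1 ⬝ᵥ v2‖) :
    IsLeast {c : ℝ |
        ∀ f : ℝ → Fin 2 → ℂ, (∀ t : ℝ, HasDerivAt f (-(C.mulVec (f t))) t) →
          ∀ t : ℝ, 0 ≤ t →
            Real.sqrt (∑ i, ‖f t i‖ ^ 2) ≤
              c * Real.exp (-lam1.re * t) * Real.sqrt (∑ i, ‖f 0 i‖ ^ 2)}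
      (1 / Real.sqrt (1 - α ^ 2)) := by
  classical
  -- embedding into EuclideanSpace
  set e : (Fin 2 → ℂ) ≃ₗ[ℂ] EuclideanSpace ℂ (Fin 2) :=
    (WithLp.linearEquiv 2 ℂ (Fin 2 → ℂ)).symm with he
  have hNorm : ∀ x : Fin 2 → ℂ, Real.sqrt (∑ i, ‖x i‖ ^ 2) = ‖e x‖ := by
    intro x
    rw [EuclideanSpace.norm_eq]
    rfl
  set u1 := e v1 with hu1
  set u2 := e v2 with hu2
  have hnorm1 : ‖u1‖ = 1 := by rw [← hNorm v1] at *; exact hn1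
  have hnorm2 : ‖u2‖ = 1 := by rw [← hNorm v2] at *; exact hn2
  have hinner : (@inner ℂ _ _ u1 u2 : ℂ) = star v1 ⬝ᵥ v2 := by
    rw [hu1, hu2, he]; simp [EuclideanSpace.inner_eq_star_dotProduct, dotProduct_comm]
  have hαeq : α = ‖(@inner ℂ _ _ u1 u2 : ℂ)‖ := by rw [hinner]; exact hα
  have hα0 : 0 ≤ α := hαeq ▸ norm_nonneg _
  have hα1 : α ≤ 1 := by
    rw [hαeq]
    calc ‖(@inner ℂ _ _ u1 u2 : ℂ)‖ ≤ ‖u1‖ * ‖u2‖ := norm_inner_le_norm u1 u2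
    _ = 1 := by rw [hnorm1, hnorm2, one_mul]
  have hne : lam1 ≠ lam2 := fun h => by rw [h] at hre; exact lt_irrefl _ hre
  -- linear independence
  have hli : LinearIndependent ℂ ![v1, v2] := by
    rw [LinearIndependent.pair_iff]
    intro s t hst
    have h2 : s • (lam1 • v1) + t • (lam2 • v2) = 0 := by
      have := congrArg C.mulVec hst
      simpa [Matrix.mulVec_add, Matrix.mulVec_smul, he1, he2] using this
    have h3 : (t * (lam2 - lam1)) • v2 = 0 := by
      have hcomb : (t * (lam2 - lam1)) • v2 =
          (s • (lam1 • v1) + t • (lam2 • v2)) - lam1 • (s • v1 + t • v2) := by module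
      rw [hcomb, h2, hst]
      simp
    have ht : t = 0 := by
      rcases smul_eq_zero.1 h3 with h | h
      · rcases mul_eq_zero.1 h with h' | h'
        · exact h'
        · exact absurd (sub_eq_zero.1 h').symm hne
      · exact absurd h hv2
    refine ⟨?_, ht⟩
    rw [ht, zero_smul, add_zero] at hst
    rcases smul_eq_zero.1 hst with h | h
    · exact h
    · exact absurd h hv1
  have hu1ne : u1 ≠ 0 := fun h => by rw [h] at hnorm1; simp at hnorm1
  have hu2ne : u2 ≠ 0 := fun h => by rw [h] at hnorm2; simp at hnorm2
  have hαlt : α < 1 := by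
    rcases lt_or_eq_of_le hα1 with h | h
    · exact h
    · exfalso
      have hcs : ‖(@inner ℂ _ _ u1 u2 : ℂ)‖ = ‖u1‖ * ‖u2‖ := by
        rw [← hαeq, h, hnorm1, hnorm2, one_mul]
      obtain ⟨r, hr0, hr⟩ := (norm_inner_eq_norm_iff hu1ne hu2ne).1 hcs
      have hv : v2 = r • v1 := by
        apply e.injective
        rw [_root_.map_smul]
        exact hr
      have := (LinearIndependent.pair_iff.1 hli) r (-1) (by rw [hv]; module)
      simpa using this.2
  have hpos : 0 < 1 - α ^ 2 := by nlinarith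
  have hsqrtpos : 0 < Real.sqrt (1 - α ^ 2) := Real.sqrt_pos.2 hpos
  set μ : ℝ := lam2.re - lam1.re with hμdef
  have hμ : 0 < μ := by simp [hμdef]; linarith
  have hlam2 : lam2 = lam1 + (μ : ℂ) := by
    apply Complex.ext <;> simp [hμdef, him]
  constructor
  · -- membership
    intro f hf t ht
    -- basis
    have hcard : Fintype.card (Fin 2) = Module.finrank ℂ (Fin 2 → ℂ) := by
      simp [Module.finrank_pi]
    let B : Module.Basis (Fin 2) ℂ (Fin 2 → ℂ) := basisOfLinearIndependentOfCardEqFinrank hli hcard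
    have hB : ⇑B = ![v1, v2] := coe_basisOfLinearIndependentOfCardEqFinrank hli hcard
    set lam : Fin 2 → ℂ := ![lam1, lam2] with hlam
    have hCB : ∀ j, C.mulVec (B j) = lam j • B j := by
      intro j
      fin_cases j <;> simp [hB, hlam, he1, he2]
    have hEigL : ∀ i, (B.coord i).comp (Matrix.mulVecLin C) = lam i • B.coord i := by
      intro i
      apply B.ext
      intro j
      simp only [LinearMap.comp_apply, Matrix.mulVecLin_apply, hCB, LinearMap.smul_apply,
        _root_.map_smul, Module.Basis.coord_apply, Module.Basis.repr_self, smul_eq_mul]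
      rw [Finsupp.single_apply]
      by_cases hij : j = i <;> simp [hij]
    have hEig : ∀ i (x : Fin 2 → ℂ), B.coord i (C.mulVec x) = lam i * B.coord i x := by
      intro i x
      have := LinearMap.congr_fun (hEigL i) x
      simpa [Matrix.mulVecLin_apply] using this
    set W : Fin 2 → ((Fin 2 → ℂ) →L[ℂ] ℂ) :=
      fun i => LinearMap.toContinuousLinearMap (B.coord i) with hW
    have hWapp : ∀ i x, W i x = B.coord i x := fun i x => rfl
    have hsol : ∀ i t, B.coord i (f t) = Complex.exp (-lam i * t) * B.coord i (f 0) := by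
      intro i
      apply ode_scalar (lam i) (fun t => W i (f t))
      intro t
      have h0 := ((W i).hasFDerivAt (x := f t)).restrictScalars ℝ |>.comp_hasDerivAt t (hf t)
      have : (W i) (-(C.mulVec (f t))) = -(lam i * W i (f t)) := by
        rw [map_neg, hWapp, hWapp, hEig]
      rw [← this]
      exact h0
    set a0 := B.coord 0 (f 0) with ha0
    set b0 := B.coord 1 (f 0) with hb0
    have hft : ∀ t : ℝ, f t =
        (Complex.exp (-lam1 * t) * a0) • v1 + (Complex.exp (-lam2 * t) * b0) • v2 := by
      intro t
      have hrepr := B.sum_repr (f t)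
      rw [Fin.sum_univ_two] at hrepr
      have e0 : B.repr (f t) 0 = Complex.exp (-lam1 * t) * a0 := by
        have := hsol 0 t
        simpa [hlam, Module.Basis.coord_apply, ha0] using this
      have e1 : B.repr (f t) 1 = Complex.exp (-lam2 * t) * b0 := by
        have := hsol 1 t
        simpa [hlam, Module.Basis.coord_apply, hb0] using this
      rw [e0, e1] at hrepr
      rw [← hrepr]
      simp [hB]
    set s : ℝ := Real.exp (-(μ * t)) with hs
    have hs0 : 0 ≤ s := (Real.exp_pos _).le
    have hs1 : s ≤ 1 := Real.exp_le_one_iff.2 (by nlinarith)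
    have hsplit : Complex.exp (-lam2 * t) = Complex.exp (-lam1 * t) * (s : ℂ) := by
      have h' : (-lam2) * (t : ℂ) = -lam1 * t + ((-(μ * t) : ℝ) : ℂ) := by
        rw [hlam2]; push_cast; ring
      rw [h', Complex.exp_add, hs, Complex.ofReal_exp]
    have hfteq : f t = Complex.exp (-lam1 * t) • (a0 • v1 + ((s : ℂ) * b0) • v2) := by
      rw [hft t, hsplit]
      module
    have hf0 : f 0 = a0 • v1 + b0 • v2 := by
      rw [hft 0]
      norm_num
    have hnexp : ‖Complex.exp (-lam1 * t)‖ = Real.exp (-lam1.re * t) := by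
      rw [Complex.norm_exp]
      congr 1
      simp [Complex.mul_re]
    have hnormt : ‖e (f t)‖ = Real.exp (-lam1.re * t) * ‖a0 • u1 + ((s : ℂ) * b0) • u2‖ := by
      rw [hfteq, _root_.map_smul, map_add, _root_.map_smul, _root_.map_smul, norm_smul, hnexp]
    have hnorm0 : ‖e (f 0)‖ = ‖a0 • u1 + b0 • u2‖ := by
      rw [hf0, map_add, _root_.map_smul, _root_.map_smul]
    have hcb := convex_bound u1 u2 hnorm1 hnorm2 α hαeq hαlt a0 b0 s hs0 hs1
    rw [hNorm (f t), hNorm (f 0), hnormt, hnorm0]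
    calc Real.exp (-lam1.re * t) * ‖a0 • u1 + ((s : ℂ) * b0) • u2‖
        ≤ Real.exp (-lam1.re * t) * ((1 / Real.sqrt (1 - α ^ 2)) * ‖a0 • u1 + b0 • u2‖) :=
          mul_le_mul_of_nonneg_left hcb (Real.exp_pos _).le
    _ = (1 / Real.sqrt (1 - α ^ 2)) * Real.exp (-lam1.re * t) * ‖a0 • u1 + b0 • u2‖ := by ring
  · -- lower bound
    intro c hc
    set z : ℂ := @inner ℂ _ _ u1 u2 with hz
    set b : ℂ := -(@inner ℂ _ _ u2 u1 : ℂ) with hb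
    have h21 : (@inner ℂ _ _ u2 u1 : ℂ) = (starRingEnd ℂ) z := by
      rw [hz, ← inner_conj_symm]
    have hbnorm : ‖b‖ = α := by
      rw [hb, norm_neg, h21, RCLike.norm_conj, hαeq, hz]
    set f : ℝ → Fin 2 → ℂ :=
      fun t => Complex.exp (-lam1 * t) • v1 + (Complex.exp (-lam2 * t) * b) • v2 with hfdef
    have hfd : ∀ t, HasDerivAt f (-(C.mulVec (f t))) t := by
      intro t
      have h1 : HasDerivAt (fun t : ℝ => Complex.exp (-lam1 * t))
          (-lam1 * Complex.exp (-lam1 * t)) t := hasDerivAt_cexp_mul (-lam1) t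
      have h2 : HasDerivAt (fun t : ℝ => Complex.exp (-lam2 * t) * b)
          (-lam2 * Complex.exp (-lam2 * t) * b) t := (hasDerivAt_cexp_mul (-lam2) t).mul_const b
      have h3 := (h1.smul_const v1).add (h2.smul_const v2)
      refine h3.congr_deriv ?_
      have hC : C.mulVec (f t) = (Complex.exp (-lam1 * t) * lam1) • v1 +
          (Complex.exp (-lam2 * t) * b * lam2) • v2 := by
        rw [hfdef]
        simp only [Matrix.mulVec_add, Matrix.mulVec_smul, he1, he2]
        module
      rw [hC]
      module
    have hf0 : f 0 = v1 + b • v2 := by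
      rw [hfdef]
      norm_num
    have hEf0 : e (f 0) = u1 + b • u2 := by rw [hf0, map_add, _root_.map_smul]
    have hzsq : Complex.normSq z = α ^ 2 := by
      rw [Complex.normSq_eq_norm_sq, hαeq]
    have hnf0sq : ‖u1 + b • u2‖ ^ 2 = 1 - α ^ 2 := by
      rw [norm_add_sq (𝕜 := ℂ), hnorm1, norm_smul, hnorm2, mul_one, hbnorm]
      have hip : (@inner ℂ _ _ u1 (b • u2) : ℂ) = -((α : ℂ) ^ 2) := by
        rw [inner_smul_right, hb, h21, ← hz]
        rw [neg_mul, mul_comm ((starRingEnd ℂ) z) z, Complex.mul_conj, hzsq]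
        push_cast
        ring
      rw [hip]
      have : RCLike.re (-((α : ℂ) ^ 2)) = -(α ^ 2) := by
        simp [← Complex.ofReal_pow]
      rw [this]
      ring
    have hnf0 : ‖u1 + b • u2‖ = Real.sqrt (1 - α ^ 2) := by
      rw [← hnf0sq, Real.sqrt_sq (norm_nonneg _)]
    have hkey : ∀ t : ℝ, 0 ≤ t → 1 - Real.exp (-(μ * t)) * α ≤ c * Real.sqrt (1 - α ^ 2) := by
      intro t ht
      have hineq := hc f hfd t ht
      rw [hNorm (f t), hNorm (f 0), hEf0, hnf0] at hineq
      set s := Real.exp (-(μ * t)) with hs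
      have hsplit : Complex.exp (-lam2 * t) = Complex.exp (-lam1 * t) * (s : ℂ) := by
        have h' : (-lam2) * (t : ℂ) = -lam1 * t + ((-(μ * t) : ℝ) : ℂ) := by
          rw [hlam2]; push_cast; ring
        rw [h', Complex.exp_add, hs, Complex.ofReal_exp]
      have hfteq : e (f t) = Complex.exp (-lam1 * t) • (u1 + ((s : ℂ) * b) • u2) := by
        rw [hfdef]
        simp only [map_add, _root_.map_smul]
        rw [hsplit]
        module
      have hnexp : ‖Complex.exp (-lam1 * t)‖ = Real.exp (-lam1.re * t) := by
        rw [Complex.norm_exp]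
        congr 1
        simp [Complex.mul_re]
      have hlow : Real.exp (-lam1.re * t) * (1 - s * α) ≤ ‖e (f t)‖ := by
        rw [hfteq, norm_smul, hnexp]
        apply mul_le_mul_of_nonneg_left _ (Real.exp_pos _).le
        have h1 : ‖u1‖ - ‖((s : ℂ) * b) • u2‖ ≤ ‖u1 + ((s : ℂ) * b) • u2‖ := by
          have h2 := norm_sub_norm_le u1 (-(((s : ℂ) * b) • u2))
          simpa [sub_neg_eq_add] using h2
        have h3 : ‖((s : ℂ) * b) • u2‖ = s * α := by
          rw [norm_smul, hnorm2, mul_one, norm_mul, hbnorm, Complex.norm_real,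
            Real.norm_of_nonneg (Real.exp_pos _).le]
        rw [hnorm1, h3] at h1
        exact h1
      have hfinal : Real.exp (-lam1.re * t) * (1 - s * α) ≤
          Real.exp (-lam1.re * t) * (c * Real.sqrt (1 - α ^ 2)) := by
        calc Real.exp (-lam1.re * t) * (1 - s * α) ≤ ‖e (f t)‖ := hlow
        _ ≤ c * Real.exp (-lam1.re * t) * Real.sqrt (1 - α ^ 2) := hineq
        _ = Real.exp (-lam1.re * t) * (c * Real.sqrt (1 - α ^ 2)) := by ring
      have := (mul_le_mul_iff_right₀ (Real.exp_pos (-lam1.re * t))).1 hfinal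
      linarith
    have hexp0 : Filter.Tendsto (fun t : ℝ => Real.exp (-(μ * t))) Filter.atTop (nhds 0) := by
      apply Real.tendsto_exp_atBot.comp
      exact Filter.tendsto_neg_atTop_atBot.comp
        (Filter.Tendsto.const_mul_atTop hμ Filter.tendsto_id)
    have htend : Filter.Tendsto (fun t : ℝ => 1 - Real.exp (-(μ * t)) * α)
        Filter.atTop (nhds 1) := by
      have := tendsto_const_nhds (x := (1 : ℝ)) (f := Filter.atTop (α := ℝ)) |>.sub
        (hexp0.mul_const α)
      simpa using this
    have h1le : (1 : ℝ) ≤ c * Real.sqrt (1 - α ^ 2) :=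
      le_of_tendsto htend (Filter.eventually_atTop.2 ⟨0, fun t ht => hkey t ht⟩)
    rw [div_le_iff₀ hsqrtpos]
    linarith
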